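/- Let g : ℝ → ℝ be any map such that g(x) = x whenever x < −10 or x > 1, and g(x) = T₁(x) for all x ∈ [−1, 1]; define g̃ : ℝ → ℝ by g̃(x) = −g(−x). Then K₊ is forward invariant under the generated semigroup: every map f belonging to the submonoid of self-maps of ℝ (under composition) generated by {T₀, T₀⁻¹, g, g̃}, where T₀⁻¹(x) = 100x, satisfies f '' K₊ ⊆ K₊. -/

import Mathlib

noncomputable section

/-- The affine contraction of ratio 1/100 fixing 0. -/
def T0 (x : ℝ) : ℝ := x / 100

/-- The affine contraction of ratio 1/100 fixing 1. -/
def T1 (x : ℝ) : ℝ := 1 + (x - 1) / 100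

/-- The affine contraction of ratio 1/100 fixing -1. -/
def Tm1 (x : ℝ) : ℝ := -1 + (x + 1) / 100

/-- The inverse of `T0`. -/
def T0inv (x : ℝ) : ℝ := 100 * x

/-- The `i`-th iterate of `T0` for `i ≥ 0`, and the `|i|`-th iterate of
`T0⁻¹ : x ↦ 100 x` for `i < 0`. -/
def T0z : ℤ → ℝ → ℝ
  | Int.ofNat n => T0^[n]
  | Int.negSucc n => T0inv^[n + 1]

/-- The set `K₊ = {0} ∪ ⋃ i ∈ ℤ, T₀^[i] '' (C₁ ∪ C₋₁)` where `C₁ = T₁ '' C`,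
`C₋₁ = T₋₁ '' C`. -/
def Kplus (C : Set ℝ) : Set ℝ := {0} ∪ ⋃ i : ℤ, T0z i '' (T1 '' C ∪ Tm1 '' C)

lemma T0_iter (n : ℕ) (x : ℝ) : T0^[n] x = x / 100 ^ n := by
  induction n with
  | zero => simp
  | succ n ih =>
    rw [Function.iterate_succ_apply', ih, T0, pow_succ]
    ring

lemma T0inv_iter (n : ℕ) (x : ℝ) : T0inv^[n] x = 100 ^ n * x := by
  induction n with
  | zero => simp
  | succ n ih =>
    rw [Function.iterate_succ_apply', ih, T0inv, pow_succ]
    ring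

lemma T0z_eq (i : ℤ) (x : ℝ) : T0z i x = (100 : ℝ) ^ (-i) * x := by
  cases i with
  | ofNat n =>
    show T0^[n] x = _
    rw [T0_iter]
    rw [show -(Int.ofNat n) = -(n : ℤ) from rfl, zpow_neg, zpow_natCast]
    field_simp
  | negSucc n =>
    show T0inv^[n+1] x = _
    rw [T0inv_iter, Int.neg_negSucc, zpow_natCast]

lemma T0z_succ (i : ℤ) (y : ℝ) : T0 (T0z i y) = T0z (i + 1) y := by
  rw [T0z_eq, T0z_eq, T0, neg_add, zpow_add₀ (by norm_num : (100 : ℝ) ≠ 0), zpow_neg_one]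
  ring

lemma T0z_pred (i : ℤ) (y : ℝ) : T0inv (T0z i y) = T0z (i - 1) y := by
  rw [T0z_eq, T0z_eq, T0inv, show -(i - 1) = -i + 1 by ring,
    zpow_add₀ (by norm_num : (100 : ℝ) ≠ 0), zpow_one]
  ring

theorem stmt_14 (C : Set ℝ) (hne : C.Nonempty) (hcomp : IsCompact C)
    (hself : C = Tm1 '' C ∪ T0 '' C ∪ T1 '' C)
    (g : ℝ → ℝ)
    (hg_id : ∀ x : ℝ, x < -10 ∨ 1 < x → g x = x)
    (hg_T1 : ∀ x ∈ Set.Icc (-1 : ℝ) 1, g x = T1 x) :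
    ∀ f ∈ Submonoid.closure ({T0, T0inv, g, fun x => -g (-x)} : Set (Function.End ℝ)),
      f '' Kplus C ⊆ Kplus C := by
  -- pieces of the self-similarity are inside C
  have hU : Tm1 '' C ∪ T0 '' C ∪ T1 '' C ⊆ C := hself.ge
  have hTm1sub : Tm1 '' C ⊆ C := fun x hx => hU (Or.inl (Or.inl hx))
  have hT0sub : T0 '' C ⊆ C := fun x hx => hU (Or.inl (Or.inr hx))
  have hT1sub : T1 '' C ⊆ C := fun x hx => hU (Or.inr hx)
  -- C ⊆ [-1, 1]
  have hsup : ∀ y ∈ C, y ≤ 1 := by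
    have hs := hcomp.sSup_mem hne
    have hsle : ∀ y ∈ C, y ≤ sSup C := fun y hy => le_csSup hcomp.bddAbove hy
    have hs1 : sSup C ≤ 1 := by
      have hs' : sSup C ∈ Tm1 '' C ∪ T0 '' C ∪ T1 '' C := hself ▸ hs
      rcases hs' with (⟨x, hx, hxe⟩ | ⟨x, hx, hxe⟩) | ⟨x, hx, hxe⟩ <;>
        have := hsle x hx <;> simp only [Tm1, T0, T1] at hxe <;> linarith
    exact fun y hy => le_trans (hsle y hy) hs1
  have hinf : ∀ y ∈ C, -1 ≤ y := by
    have hs := hcomp.sInf_mem hne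
    have hsle : ∀ y ∈ C, sInf C ≤ y := fun y hy => csInf_le hcomp.bddBelow hy
    have hs1 : -1 ≤ sInf C := by
      have hs' : sInf C ∈ Tm1 '' C ∪ T0 '' C ∪ T1 '' C := hself ▸ hs
      rcases hs' with (⟨x, hx, hxe⟩ | ⟨x, hx, hxe⟩) | ⟨x, hx, hxe⟩ <;>
        have := hsle x hx <;> simp only [Tm1, T0, T1] at hxe <;> linarith
    exact fun y hy => le_trans hs1 (hsle y hy)
  -- 0 ∈ C
  have hdiv : ∀ n : ℕ, ∀ w ∈ C, w / 100 ^ n ∈ C := by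
    intro n
    induction n with
    | zero => intro w hw; simpa using hw
    | succ n ih =>
      intro w hw
      have : w / 100 ^ (n + 1) = T0 (w / 100 ^ n) := by rw [T0, pow_succ]; ring
      rw [this]
      exact hT0sub ⟨_, ih w hw, rfl⟩
  have h0C : (0 : ℝ) ∈ C := by
    obtain ⟨w, hw⟩ := hne
    have htend : Filter.Tendsto (fun n : ℕ => w / 100 ^ n) Filter.atTop (nhds 0) := by
      have h1 : Filter.Tendsto (fun n : ℕ => ((1 : ℝ) / 100) ^ n) Filter.atTop (nhds 0) :=
        tendsto_pow_atTop_nhds_zero_of_lt_one (by norm_num) (by norm_num)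
      have := h1.const_mul w
      simpa [div_pow, mul_div_assoc, div_eq_mul_inv] using this
    exact hcomp.isClosed.mem_of_tendsto htend
      (Filter.Eventually.of_forall fun n => hdiv n w hw)
  -- membership helpers for Kplus
  have memK : ∀ (i : ℤ) (y : ℝ), y ∈ T1 '' C ∪ Tm1 '' C → T0z i y ∈ Kplus C :=
    fun i y hy => Or.inr (Set.mem_iUnion.2 ⟨i, ⟨y, hy, rfl⟩⟩)
  have memK0 : ∀ y : ℝ, y ∈ T1 '' C ∪ Tm1 '' C → y ∈ Kplus C := by
    intro y hy
    have := memK 0 y hy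
    rwa [T0z_eq, neg_zero, zpow_zero, one_mul] at this
  -- bounds on C₁ and C₋₁
  have hC1 : ∀ y ∈ T1 '' C, 98 / 100 ≤ y ∧ y ≤ 1 := by
    rintro y ⟨x, hx, rfl⟩
    have h1 := hsup x hx; have h2 := hinf x hx
    constructor <;> simp only [T1] <;> linarith
  have hCm1 : ∀ y ∈ Tm1 '' C, -1 ≤ y ∧ y ≤ -(98 / 100) := by
    rintro y ⟨x, hx, rfl⟩
    have h1 := hsup x hx; have h2 := hinf x hx
    constructor <;> simp only [Tm1] <;> linarith
  -- iterated image into C for nonnegative i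
  have hiterC : ∀ (i : ℤ), 0 ≤ i → ∀ y ∈ C, T0z i y ∈ C := by
    intro i hi y hy
    obtain ⟨n, rfl⟩ := Int.eq_ofNat_of_zero_le hi
    change T0^[n] y ∈ C
    clear hi
    induction n with
    | zero => simpa using hy
    | succ n ih =>
      rw [Function.iterate_succ_apply']
      exact hT0sub ⟨_, ih, rfl⟩
  -- magnitude bound for negative i
  have hbig : ∀ (i : ℤ), i < 0 → (100 : ℝ) ≤ (100 : ℝ) ^ (-i) := by
    intro i hi
    have h1 : (1 : ℤ) ≤ -i := by omega
    calc (100 : ℝ) = (100 : ℝ) ^ (1 : ℤ) := (zpow_one _).symm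
      _ ≤ (100 : ℝ) ^ (-i) := by
          apply zpow_le_zpow_right₀ (by norm_num) h1
  -- case analysis for elements of Kplus
  have hKcase : ∀ z ∈ Kplus C,
      z = 0 ∨ (z ∈ C ∧ -1 ≤ z ∧ z ≤ 1) ∨ (98 ≤ z ∨ z ≤ -98) := by
    intro z hz
    rcases hz with hz | hz
    · exact Or.inl hz
    · obtain ⟨i, y, hy, rfl⟩ := Set.mem_iUnion.1 hz
      rcases le_or_gt 0 i with hi | hi
      · have hyC : y ∈ C := by rcases hy with hy | hy; exacts [hT1sub hy, hTm1sub hy]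
        have hC := hiterC i hi y hyC
        exact Or.inr (Or.inl ⟨hC, hinf _ hC, hsup _ hC⟩)
      · have hA := hbig i hi
        rw [T0z_eq]
        rcases hy with hy | hy
        · have hb := hC1 y hy
          refine Or.inr (Or.inr (Or.inl ?_))
          nlinarith [hb.1, hb.2, hA]
        · have hb := hCm1 y hy
          refine Or.inr (Or.inr (Or.inr ?_))
          nlinarith [hb.1, hb.2, hA]
  -- pointwise invariance for each generator
  have hT0K : ∀ z ∈ Kplus C, T0 z ∈ Kplus C := by
    intro z hz
    rcases hz with hz | hz
    · rw [Set.mem_singleton_iff] at hz; subst hz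
      exact Or.inl (by simp [T0])
    · obtain ⟨i, y, hy, rfl⟩ := Set.mem_iUnion.1 hz
      rw [T0z_succ]
      exact memK _ _ hy
  have hT0invK : ∀ z ∈ Kplus C, T0inv z ∈ Kplus C := by
    intro z hz
    rcases hz with hz | hz
    · rw [Set.mem_singleton_iff] at hz; subst hz
      exact Or.inl (by simp [T0inv])
    · obtain ⟨i, y, hy, rfl⟩ := Set.mem_iUnion.1 hz
      rw [T0z_pred]
      exact memK _ _ hy
  have hgK : ∀ z ∈ Kplus C, g z ∈ Kplus C := by
    intro z hz
    rcases hKcase z hz with hz0 | ⟨hzC, hz1, hz2⟩ | hbig'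
    · subst hz0
      rw [hg_T1 0 ⟨by norm_num, by norm_num⟩]
      exact memK0 _ (Or.inl ⟨0, h0C, rfl⟩)
    · rw [hg_T1 z ⟨hz1, hz2⟩]
      exact memK0 _ (Or.inl ⟨z, hzC, rfl⟩)
    · rcases hbig' with h | h
      · rw [hg_id z (Or.inr (by linarith))]; exact hz
      · rw [hg_id z (Or.inl (by linarith))]; exact hz
  have hgtK : ∀ z ∈ Kplus C, -g (-z) ∈ Kplus C := by
    intro z hz
    rcases hKcase z hz with hz0 | ⟨hzC, hz1, hz2⟩ | hbig'
    · subst hz0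
      rw [neg_zero, hg_T1 0 ⟨by norm_num, by norm_num⟩]
      have : -T1 0 = Tm1 0 := by simp [T1, Tm1]; norm_num
      rw [this]
      exact memK0 _ (Or.inr ⟨0, h0C, rfl⟩)
    · rw [hg_T1 (-z) ⟨by linarith, by linarith⟩]
      have : -T1 (-z) = Tm1 z := by simp [T1, Tm1]; ring
      rw [this]
      exact memK0 _ (Or.inr ⟨z, hzC, rfl⟩)
    · rcases hbig' with h | h
      · rw [hg_id (-z) (Or.inl (by linarith)), neg_neg]; exact hz
      · rw [hg_id (-z) (Or.inr (by linarith)), neg_neg]; exact hz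
  -- closure induction
  intro f hf
  induction hf using Submonoid.closure_induction with
  | mem f hfmem =>
    rcases hfmem with h | h | h | h <;> subst h <;>
      rintro z ⟨w, hw, rfl⟩
    · exact hT0K w hw
    · exact hT0invK w hw
    · exact hgK w hw
    · exact hgtK w hw
  | one =>
    rintro z ⟨w, hw, rfl⟩
    exact hw
  | mul f f' _ _ hfK hf'K =>
    rintro z ⟨w, hw, rfl⟩
    exact hfK ⟨f' w, hf'K ⟨w, hw, rfl⟩, rfl⟩
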